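/- Let G ⊂ U(n) be a compact Lie group with Lie algebra g, and let ξ, η ∈ g, u ∈ G, and g₀ := exp(iη)·u ∈ G^c. Then g₀ ξ g₀⁻¹ = ξ if and only if u ξ u⁻¹ = ξ and [ξ, η] = 0. In other words, the stabilizer of ξ under the adjoint action of G^c is the complexification of its stabilizer in G. -/

import Mathlib

open Matrix

open NormedSpace in
/-- If a Hermitian matrix's exponential commutes with `M`, so does the matrix itself. -/
lemma hermitian_comm_of_exp_comm {n : ℕ} {H M : Matrix (Fin n) (Fin n) ℂ}
    (hH : H.IsHermitian)
    (hc : NormedSpace.exp H * M = M * NormedSpace.exp H) :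
    H * M = M * H := by
  set V : Matrix (Fin n) (Fin n) ℂ := (Matrix.IsHermitian.eigenvectorUnitary hH : Matrix (Fin n) (Fin n) ℂ) with hVdef
  have hV : V ∈ Matrix.unitaryGroup (Fin n) ℂ := (Matrix.IsHermitian.eigenvectorUnitary hH).2
  have hV1 : Vᴴ * V = 1 := by
    have := hV.1
    rwa [Matrix.star_eq_conjTranspose] at this
  have hV2 : V * Vᴴ = 1 := by
    have := hV.2
    rwa [Matrix.star_eq_conjTranspose] at this
  set d : Fin n → ℝ := hH.eigenvalues with hddef
  set D : Matrix (Fin n) (Fin n) ℂ := Matrix.diagonal (fun i => (d i : ℂ)) with hDdef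
  have hspec : H = V * D * Vᴴ := by
    have := hH.spectral_theorem
    rw [Unitary.conjStarAlgAut_apply, Matrix.star_eq_conjTranspose] at this
    exact this
  have hVinv : V⁻¹ = Vᴴ := Matrix.inv_eq_left_inv hV1
  have hexp : exp H = V * Matrix.diagonal (fun i => Complex.exp (d i)) * Vᴴ := by
    rw [hspec, ← hVinv, Matrix.exp_conj V D ⟨Unitary.toUnits (⟨V, hV⟩ : Matrix.unitaryGroup (Fin n) ℂ), rfl⟩]
    congr 1
    · congr 1
      rw [hDdef, Matrix.exp_diagonal, Pi.exp_def]
      congr 1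
      ext i
      rw [← Complex.exp_eq_exp_ℂ]
  set N : Matrix (Fin n) (Fin n) ℂ := Vᴴ * M * V with hNdef
  have hM : M = V * N * Vᴴ := by
    rw [hNdef]
    calc M = (V * Vᴴ) * M * (V * Vᴴ) := by rw [hV2]; rw [Matrix.one_mul, Matrix.mul_one]
    _ = V * (Vᴴ * M * V) * Vᴴ := by simp only [Matrix.mul_assoc]
  -- transport commutation to the diagonal side
  have hcomm' : Matrix.diagonal (fun i => Complex.exp (d i)) * N = N * Matrix.diagonal (fun i => Complex.exp (d i)) := by
    have h1 : Vᴴ * (exp H * M) * V = Vᴴ * (M * exp H) * V := by rw [hc]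
    rw [hexp, hM] at h1
    calc Matrix.diagonal (fun i => Complex.exp (d i)) * N
        = (Vᴴ * V) * Matrix.diagonal (fun i => Complex.exp (d i)) * (Vᴴ * V) * N * (Vᴴ * V) := by
          rw [hV1]; simp
      _ = Vᴴ * ((V * Matrix.diagonal (fun i => Complex.exp (d i)) * Vᴴ) * (V * N * Vᴴ)) * V := by
          simp only [Matrix.mul_assoc]
      _ = Vᴴ * ((V * N * Vᴴ) * (V * Matrix.diagonal (fun i => Complex.exp (d i)) * Vᴴ)) * V := by
          rw [h1]
      _ = (Vᴴ * V) * N * (Vᴴ * V) * Matrix.diagonal (fun i => Complex.exp (d i)) * (Vᴴ * V) := by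
          simp only [Matrix.mul_assoc]
      _ = N * Matrix.diagonal (fun i => Complex.exp (d i)) := by rw [hV1]; simp
  have hDN : D * N = N * D := by
    ext i j
    rw [hDdef, Matrix.diagonal_mul, Matrix.mul_diagonal]
    have h2 := congrFun (congrFun hcomm' i) j
    rw [Matrix.diagonal_mul, Matrix.mul_diagonal] at h2
    by_cases hz : N i j = 0
    · rw [hz]; ring
    · have : Complex.exp (d i) = Complex.exp (d j) := by
        have h2' : Complex.exp (d i) * N i j = Complex.exp (d j) * N i j := by
          rw [h2, mul_comm]
        exact mul_right_cancel₀ hz h2'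
      have heq : d i = d j := by
        rw [← Complex.ofReal_exp, ← Complex.ofReal_exp] at this
        exact Real.exp_injective (by exact_mod_cast this)
      rw [heq]; ring
  -- conjugate back
  rw [hspec, hM]
  calc V * D * Vᴴ * (V * N * Vᴴ) = V * (D * (Vᴴ * V) * N) * Vᴴ := by simp only [Matrix.mul_assoc]
    _ = V * (D * N) * Vᴴ := by rw [hV1]; simp
    _ = V * (N * D) * Vᴴ := by rw [hDN]
    _ = V * (N * (Vᴴ * V) * D) * Vᴴ := by rw [hV1]; simp
    _ = V * N * Vᴴ * (V * D * Vᴴ) := by simp only [Matrix.mul_assoc]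

/-- (Lemma `le:isotropy` (ii).)
Let `ξ, η` be skew-Hermitian matrices (elements of the Lie algebra
`g ⊆ u(n)` of a compact group `G ⊆ U(n)`) and let `u` be unitary, so that
`g₀ := exp(iη) u` is a typical element of the complexification `G^c` (polar
decomposition).  Then `g₀ ξ g₀⁻¹ = ξ` iff `u ξ u⁻¹ = ξ` and `[ξ, η] = 0`:
the stabilizer of `ξ` in `G^c` is the complexification of its stabilizer
in `G`. -/
theorem stmt_2 {n : ℕ} (ξ η u : Matrix (Fin n) (Fin n) ℂ)
    (hξ : ξᴴ = -ξ) (hη : ηᴴ = -η)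
    (hu : u ∈ Matrix.unitaryGroup (Fin n) ℂ) :
    (NormedSpace.exp (Complex.I • η) * u) * ξ *
        (NormedSpace.exp (Complex.I • η) * u)⁻¹ = ξ ↔
      u * ξ * u⁻¹ = ξ ∧ ξ * η - η * ξ = 0 := by
  set A : Matrix (Fin n) (Fin n) ℂ := Complex.I • η with hAdef
  set E : Matrix (Fin n) (Fin n) ℂ := NormedSpace.exp A with hEdef
  have hA : A.IsHermitian := by
    rw [Matrix.IsHermitian, hAdef, Matrix.conjTranspose_smul, hη, Complex.star_def,
      Complex.conj_I, neg_smul, smul_neg, neg_neg]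
  have hEunit : IsUnit E := Matrix.isUnit_exp A
  have hEdet : IsUnit E.det := (Matrix.isUnit_iff_isUnit_det E).mp hEunit
  have hEinv : E * E⁻¹ = 1 := Matrix.mul_nonsing_inv E hEdet
  have hEinv' : E⁻¹ * E = 1 := Matrix.nonsing_inv_mul E hEdet
  have hEH : Eᴴ = E := by
    rw [hEdef, ← Matrix.exp_conjTranspose, hA]
  have huinv : u⁻¹ = uᴴ := Matrix.inv_eq_left_inv (by
    have := hu.1; rwa [Matrix.star_eq_conjTranspose] at this)
  have huu : u * u⁻¹ = 1 := by
    rw [huinv]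
    have := hu.2; rwa [Matrix.star_eq_conjTranspose] at this
  have huu' : u⁻¹ * u = 1 := by
    rw [huinv]
    have := hu.1; rwa [Matrix.star_eq_conjTranspose] at this
  have hrev : (E * u)⁻¹ = u⁻¹ * E⁻¹ := Matrix.mul_inv_rev E u
  have hLHS : (E * u) * ξ * (E * u)⁻¹ = E * (u * ξ * u⁻¹) * E⁻¹ := by
    rw [hrev]; simp only [Matrix.mul_assoc]
  constructor
  · intro h
    rw [hLHS] at h
    set B : Matrix (Fin n) (Fin n) ℂ := u * ξ * u⁻¹ with hBdef
    have hB : Bᴴ = -B := by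
      rw [hBdef, Matrix.conjTranspose_mul, Matrix.conjTranspose_mul, hξ, huinv,
        Matrix.conjTranspose_conjTranspose]
      rw [Matrix.neg_mul, Matrix.mul_neg, Matrix.mul_assoc]
    have hEinvH : (E⁻¹)ᴴ = E⁻¹ := by rw [Matrix.conjTranspose_nonsing_inv, hEH]
    -- conjugate-transpose of h
    have h2 : E⁻¹ * B * E = ξ := by
      have := congrArg Matrix.conjTranspose h
      rw [Matrix.conjTranspose_mul, Matrix.conjTranspose_mul, hEinvH, hB, hEH, hξ] at this
      have : E⁻¹ * (B * E) = ξ := by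
        have h3 : -(E⁻¹ * (B * E)) = -ξ := by
          rw [← this]; simp [Matrix.mul_assoc, Matrix.mul_neg, Matrix.neg_mul]
        exact neg_injective h3
      rw [← this]; simp [Matrix.mul_assoc]
    -- E^2 commutes with ξ
    have hB2 : B = E⁻¹ * ξ * E := by
      calc B = (E⁻¹ * E) * B * (E⁻¹ * E) := by rw [hEinv', Matrix.one_mul, Matrix.mul_one]
      _ = E⁻¹ * (E * B * E⁻¹) * E := by simp only [Matrix.mul_assoc]
      _ = E⁻¹ * ξ * E := by rw [h]
    have hE2 : (E * E) * ξ = ξ * (E * E) := by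
      have h4 : E * B = ξ * E := by
        calc E * B = (E * B * E⁻¹) * E := by
              simp only [Matrix.mul_assoc, hEinv', Matrix.mul_one]
        _ = ξ * E := by rw [h]
      have h5 : E * ξ = B * E := by
        calc E * ξ = E * (E⁻¹ * B * E) := by rw [h2]
        _ = (E * E⁻¹) * (B * E) := by simp only [Matrix.mul_assoc]
        _ = B * E := by rw [hEinv, Matrix.one_mul]
      calc (E * E) * ξ = E * (E * ξ) := Matrix.mul_assoc E E ξ
      _ = E * (B * E) := by rw [h5]
      _ = (E * B) * E := (Matrix.mul_assoc E B E).symm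
      _ = (ξ * E) * E := by rw [h4]
      _ = ξ * (E * E) := Matrix.mul_assoc ξ E E
    have hAA : (A + A).IsHermitian := hA.add hA
    have hexpAA : NormedSpace.exp (A + A) = E * E := by
      rw [Matrix.exp_add_of_commute A A (Commute.refl A), ← hEdef]
    have hcommAA : (A + A) * ξ = ξ * (A + A) := by
      apply hermitian_comm_of_exp_comm hAA
      rw [hexpAA]; exact hE2
    have hcommA : A * ξ = ξ * A := by
      have : (2 : ℂ) • (A * ξ) = (2 : ℂ) • (ξ * A) := by
        have h6 : (A + A) * ξ = (2 : ℂ) • (A * ξ) := by rw [Matrix.add_mul, two_smul]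
        have h7 : ξ * (A + A) = (2 : ℂ) • (ξ * A) := by rw [Matrix.mul_add, two_smul]
        rw [← h6, ← h7, hcommAA]
      exact smul_right_injective _ (two_ne_zero) this
    have hcommη : ξ * η - η * ξ = 0 := by
      have : Complex.I • (η * ξ) = Complex.I • (ξ * η) := by
        have h8 : A * ξ = Complex.I • (η * ξ) := by rw [hAdef, Matrix.smul_mul]
        have h9 : ξ * A = Complex.I • (ξ * η) := by rw [hAdef, Matrix.mul_smul]
        rw [← h8, ← h9, hcommA]
      have := smul_right_injective (Matrix (Fin n) (Fin n) ℂ) Complex.I_ne_zero this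
      rw [this, sub_self]
    refine ⟨?_, hcommη⟩
    -- E commutes with ξ, so B = ξ
    have hcEξ : Commute (NormedSpace.exp A) ξ :=
      (Commute.exp_left hcommA)
    have hEξ : E * ξ = ξ * E := hcEξ
    have : B = ξ := by
      rw [hB2]
      calc E⁻¹ * ξ * E = E⁻¹ * (ξ * E) := by rw [Matrix.mul_assoc]
      _ = E⁻¹ * (E * ξ) := by rw [hEξ]
      _ = (E⁻¹ * E) * ξ := by rw [Matrix.mul_assoc]
      _ = ξ := by rw [hEinv', Matrix.one_mul]
    exact this
  · rintro ⟨h1, h2⟩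
    rw [hLHS, h1]
    have hcommA : A * ξ = ξ * A := by
      have h3 : η * ξ = ξ * η := by linear_combination (norm := module) -h2
      rw [hAdef, Matrix.smul_mul, Matrix.mul_smul, h3]
    have hEξ : E * ξ = ξ * E := (Commute.exp_left hcommA)
    calc E * ξ * E⁻¹ = ξ * E * E⁻¹ := by rw [hEξ]
    _ = ξ * (E * E⁻¹) := by rw [Matrix.mul_assoc]
    _ = ξ := by rw [hEinv, Matrix.mul_one]
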